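/- Let w ∈ S_n avoid the patterns 3412 and 4231, and suppose 1 ≤ i < j ≤ n satisfy: w fixes {1,...,i-1} setwise, w(i) ≥ j, and w(j) = i. Then w(i) > w(i+1) > ... > w(j), i.e., w is strictly decreasing on positions i through j. -/

import Mathlib

open Equiv

/-- Number of inversions (Coxeter length) of a permutation of ℕ. -/
noncomputable def invNum (w : Perm ℕ) : ℕ :=
  Set.ncard {p : ℕ × ℕ | p.1 < p.2 ∧ w p.2 < w p.1}

/-- Strong Bruhat order on (finitary) permutations of ℕ. -/
def BruhatLE (x y : Perm ℕ) : Prop :=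
  Relation.ReflTransGen
    (fun u v => (∃ a b : ℕ, a < b ∧ v = u * Equiv.swap a b) ∧ invNum u < invNum v) x y

def BruhatLT (x y : Perm ℕ) : Prop := BruhatLE x y ∧ x ≠ y

/-- w avoids the pattern 3412. -/
def Avoids3412 (w : Perm ℕ) : Prop :=
  ¬ ∃ a b c d : ℕ, a < b ∧ b < c ∧ c < d ∧ w c < w d ∧ w d < w a ∧ w a < w b

/-- w avoids the pattern 4231. -/
def Avoids4231 (w : Perm ℕ) : Prop :=
  ¬ ∃ a b c d : ℕ, a < b ∧ b < c ∧ c < d ∧ w d < w b ∧ w b < w c ∧ w c < w a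

/-- Lemma: with wedge data (i,j), a smooth w is strictly decreasing on
positions i,…,j. -/
theorem stmt4 (n : ℕ) (w : Perm ℕ) (hw : ∀ k, n ≤ k → w k = k)
    (h3412 : Avoids3412 w) (h4231 : Avoids4231 w)
    (i j : ℕ) (hij : i < j) (hjn : j < n)
    (hfix : (fun m => w m) '' {m | m < i} = {m | m < i})
    (hwi : j ≤ w i) (hwj : w j = i) :
    ∀ k, i ≤ k → k < j → w (k + 1) < w k := by
  have F1 : ∀ m, m < i → w m < i := by
    intro m hm
    have : w m ∈ (fun m => w m) '' {m | m < i} := ⟨m, hm, rfl⟩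
    rwa [hfix] at this
  have F2 : ∀ m, i ≤ m → i ≤ w m := by
    intro m hm
    by_contra h
    push_neg at h
    have : w m ∈ (fun m => w m) '' {m | m < i} := by rw [hfix]; exact h
    obtain ⟨m', hm', he⟩ := this
    simp only [Set.mem_setOf_eq] at hm'
    simp only [] at he
    have hmm : m' = m := w.injective he
    omega
  have F3 : ∀ m, i ≤ m → m ≠ j → i < w m := by
    intro m hm hmj
    rcases (F2 m hm).lt_or_eq with h | h
    · exact h
    · exfalso
      apply hmj
      exact w.injective (by rw [← h, hwj])
  intro k hik hkj
  by_contra hasc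
  push_neg at hasc
  have hne : w k ≠ w (k + 1) := fun h => by have := w.injective h; omega
  have hasc' : w k < w (k + 1) := lt_of_le_of_ne hasc hne
  have hkj' : k + 1 < j := by
    rcases lt_or_eq_of_le (Nat.succ_le_of_lt hkj) with h | h
    · exact h
    · exfalso
      have h1 : w (k + 1) = i := by rw [show k + 1 = j from h, hwj]
      have h2 := F3 k hik (by omega)
      omega
  rcases lt_trichotomy (w i) (w (k + 1)) with hlt | heq | hgt
  · -- find p > j with i < w p < w i, then 3412 at (i, k+1, j, p)
    by_cases hall : ∀ v ∈ Finset.Ioo i (w i), w⁻¹ v ≤ j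
    · exfalso
      have hsub : ∀ v ∈ Finset.Ioo i (w i), w⁻¹ v ∈ (Finset.Ioo i j).erase (k + 1) := by
        intro v hv
        simp only [Finset.mem_Ioo] at hv
        have hpv : w (w⁻¹ v) = v := w.apply_symm_apply v
        have h1 : ¬ (w⁻¹ v < i) := fun h => by have := F1 _ h; omega
        have h2 : w⁻¹ v ≠ i := fun h => by rw [h] at hpv; omega
        have h3 : w⁻¹ v ≠ j := fun h => by rw [h, hwj] at hpv; omega
        have h4 : w⁻¹ v ≠ k + 1 := fun h => by rw [h] at hpv; omega
        have h5 := hall v (by simp only [Finset.mem_Ioo]; omega)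
        simp only [Finset.mem_erase, Finset.mem_Ioo]
        omega
      have hinj : Set.InjOn (fun v => w⁻¹ v) (Finset.Ioo i (w i)) :=
        fun a _ b _ h => (w⁻¹).injective h
      have hcard := Finset.card_le_card_of_injOn _ hsub hinj
      have hmem : k + 1 ∈ Finset.Ioo i j := by simp only [Finset.mem_Ioo]; omega
      rw [Finset.card_erase_of_mem hmem, Nat.card_Ioo, Nat.card_Ioo] at hcard
      omega
    · push_neg at hall
      obtain ⟨v, hv, hp⟩ := hall
      simp only [Finset.mem_Ioo] at hv
      have hpv : w (w⁻¹ v) = v := w.apply_symm_apply v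
      exact h3412 ⟨i, k + 1, j, w⁻¹ v, by omega, hkj', hp, by rw [hwj, hpv]; omega,
        by rw [hpv]; omega, hlt⟩
  · exact absurd (w.injective heq) (by omega)
  · have hik' : i < k := by
      rcases hik.lt_or_eq with h | h
      · exact h
      · exfalso; rw [h] at hgt; omega
    have h1 : i < w k := F3 k hik (by omega)
    exact h4231 ⟨i, k, k + 1, j, hik', by omega, hkj', by rw [hwj]; omega, hasc', hgt⟩
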